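/- With the setup of the balanced clustering SDP (true clusters C*_1,…,C*_k of size ℓ, Y feasible with Y ⪰ 0, Y ≥ 0, diag(Y) = 1, Y·1_n = ℓ·1_n), let μ_1,…,μ_k ∈ ℝ^d be the cluster centers, Δ_{ab} := ‖μ_a − μ_b‖₂, and Δ := min_{a≠b} Δ_{ab}. Define S₄ := ⟨Y − Y*, E[HHᵀ]⟩ where (E[HHᵀ])_{ij} = ⟨μ_{σ*(i)}, μ_{σ*(j)}⟩ for i ≠ j and the diagonal of Y − Y* is zero. Then S₄ = −(1/2) ∑_{a≠b} T_{ab} Δ_{ab}² ≤ −(1/4) Δ² ‖Y − Y*‖₁, where T_{ab} := ∑_{i∈C*_a, j∈C*_b} (Y − Y*)_{ij}. -/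

import Mathlib

open Finset

theorem stmt_7 (k l d : ℕ) (hk : 2 ≤ k) (hl : 1 ≤ l) (n : ℕ) (hn : n = k * l)
    (σ : Fin n → Fin k)
    (hbal : ∀ a : Fin k, (Finset.univ.filter (fun i => σ i = a)).card = l)
    (Ystar : Matrix (Fin n) (Fin n) ℝ)
    (hYstar : ∀ i j, Ystar i j = if σ i = σ j then 1 else 0)
    (Y : Matrix (Fin n) (Fin n) ℝ)
    (hpsd : Y.PosSemidef) (hnonneg : ∀ i j, 0 ≤ Y i j)
    (hdiag : ∀ i, Y i i = 1) (hrow : ∀ i, ∑ j, Y i j = (l : ℝ))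
    (μ : Fin k → EuclideanSpace ℝ (Fin d)) (Δ : ℝ) (hΔ0 : 0 ≤ Δ)
    (hΔ : ∀ a b, a ≠ b → Δ ≤ ‖μ a - μ b‖)
    (T : Fin k → Fin k → ℝ)
    (hT : ∀ a b, T a b = ∑ i ∈ Finset.univ.filter (fun i => σ i = a),
        ∑ j ∈ Finset.univ.filter (fun j => σ j = b), (Y i j - Ystar i j))
    (S₄ : ℝ)
    (hS₄ : S₄ = ∑ i, ∑ j, (Y i j - Ystar i j) * (inner ℝ (μ (σ i)) (μ (σ j)) : ℝ)) :
    S₄ = -(1 / 2) * ∑ a, ∑ b ∈ Finset.univ.filter (fun b => b ≠ a), T a b * ‖μ a - μ b‖ ^ 2 ∧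
    S₄ ≤ -(1 / 4) * Δ ^ 2 * (∑ i, ∑ j, |Y i j - Ystar i j|) := by
  set D : Fin n → Fin n → ℝ := fun i j => Y i j - Ystar i j with hDdef
  -- symmetry of Y
  have hsym : ∀ i j, Y j i = Y i j := by
    intro i j
    simpa using hpsd.1.apply i j
  -- Y entries at most 1
  have hYle1 : ∀ i j, Y i j ≤ 1 := by
    intro i j
    rcases eq_or_ne i j with rfl | hij
    · exact le_of_eq (hdiag i)
    · set x : Fin n → ℝ := Pi.single i 1 - Pi.single j 1 with hx
      have hq := hpsd.dotProduct_mulVec_nonneg x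
      have hquad : dotProduct (star x) (Y.mulVec x)
          = Y i i - Y i j - Y j i + Y j j := by
        simp [hx, dotProduct, Matrix.mulVec, Pi.single_apply, sub_mul, mul_sub,
          Finset.sum_sub_distrib, mul_ite, ite_mul, Finset.sum_ite_eq, Finset.sum_ite_eq',
          hij, hij.symm]
        ring
      rw [hquad] at hq
      have h1 := hdiag i; have h2 := hdiag j; have h3 := hsym i j
      linarith
  -- row sums of Ystar
  have hYstarrow : ∀ i, ∑ j, Ystar i j = (l : ℝ) := by
    intro i
    have h1 : ∑ j, Ystar i j = ((Finset.univ.filter fun j => σ j = σ i).card : ℝ) := by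
      rw [Finset.card_filter]
      push_cast
      refine Finset.sum_congr rfl fun j _ => ?_
      rw [hYstar]
      by_cases h : σ i = σ j
      · rw [if_pos h, if_pos h.symm]
      · rw [if_neg h, if_neg (fun hh : σ j = σ i => h hh.symm)]
    rw [h1, hbal (σ i)]
  have hDrow : ∀ i, ∑ j, D i j = 0 := by
    intro i
    simp only [hDdef, Finset.sum_sub_distrib, hrow i, hYstarrow i, sub_self]
  have hDsym : ∀ i j, Y j i - Ystar j i = Y i j - Ystar i j := by
    intro i j
    rw [hsym i j, hYstar, hYstar]
    by_cases h : σ i = σ j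
    · rw [if_pos h, if_pos h.symm]
    · rw [if_neg h, if_neg (fun hh : σ j = σ i => h hh.symm)]
  -- row sums of T vanish
  have hTa : ∀ a, ∑ b, T a b = 0 := by
    intro a
    simp only [hT]
    rw [Finset.sum_comm]
    rw [show (∑ i ∈ Finset.univ.filter (fun i => σ i = a), ∑ b : Fin k,
        ∑ j ∈ Finset.univ.filter (fun j => σ j = b), D i j)
        = ∑ i ∈ Finset.univ.filter (fun i => σ i = a), ∑ j, D i j from
      Finset.sum_congr rfl fun i _ => Finset.sum_fiberwise _ σ _]
    simp [hDrow]
  have hTsym : ∀ a b, T a b = T b a := by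
    intro a b
    rw [hT, hT, Finset.sum_comm]
    exact Finset.sum_congr rfl fun j _ => Finset.sum_congr rfl fun i _ => hDsym j i
  have hTb : ∀ b, ∑ a, T a b = 0 := by
    intro b
    rw [show (∑ a, T a b) = ∑ a, T b a from Finset.sum_congr rfl fun a _ => hTsym a b]
    exact hTa b
  -- S₄ in terms of T
  have hS4' : S₄ = ∑ a, ∑ b, T a b * (inner ℝ (μ a) (μ b) : ℝ) := by
    rw [hS₄]
    rw [show (∑ a, ∑ b, T a b * (inner ℝ (μ a) (μ b) : ℝ))
        = ∑ a, ∑ i ∈ Finset.univ.filter (fun i => σ i = a),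
            ∑ j, D i j * (inner ℝ (μ (σ i)) (μ (σ j)) : ℝ) from ?_]
    · rw [Finset.sum_fiberwise Finset.univ σ
        (fun i => ∑ j, D i j * (inner ℝ (μ (σ i)) (μ (σ j)) : ℝ))]
    · refine Finset.sum_congr rfl fun a _ => ?_
      rw [show (∑ b, T a b * (inner ℝ (μ a) (μ b) : ℝ))
          = ∑ b, ∑ i ∈ Finset.univ.filter (fun i => σ i = a),
              ∑ j ∈ Finset.univ.filter (fun j => σ j = b),
                D i j * (inner ℝ (μ (σ i)) (μ (σ j)) : ℝ) from ?_]
      · rw [Finset.sum_comm]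
        refine Finset.sum_congr rfl fun i _ => ?_
        exact Finset.sum_fiberwise Finset.univ σ
          (fun j => D i j * (inner ℝ (μ (σ i)) (μ (σ j)) : ℝ))
      · refine Finset.sum_congr rfl fun b _ => ?_
        rw [hT, Finset.sum_mul]
        refine Finset.sum_congr rfl fun i hi => ?_
        rw [Finset.sum_mul]
        refine Finset.sum_congr rfl fun j hj => ?_
        have hia : σ i = a := (Finset.mem_filter.1 hi).2
        have hjb : σ j = b := (Finset.mem_filter.1 hj).2
        rw [hia, hjb]
  -- polarization
  have hinner : ∀ a b : Fin k, (inner ℝ (μ a) (μ b) : ℝ)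
      = (‖μ a‖ ^ 2 + ‖μ b‖ ^ 2 - ‖μ a - μ b‖ ^ 2) / 2 := by
    intro a b
    have h := norm_sub_sq_real (μ a) (μ b)
    linarith
  have z1 : ∑ a, ∑ b, T a b * ‖μ a‖ ^ 2 = 0 := by
    have h : ∀ a : Fin k, ∑ b, T a b * ‖μ a‖ ^ 2 = 0 := fun a => by
      rw [← Finset.sum_mul, hTa a, zero_mul]
    simp [h]
  have z2 : ∑ a, ∑ b, T a b * ‖μ b‖ ^ 2 = 0 := by
    rw [Finset.sum_comm]
    have h : ∀ b : Fin k, ∑ a, T a b * ‖μ b‖ ^ 2 = 0 := fun b => by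
      rw [← Finset.sum_mul, hTb b, zero_mul]
    simp [h]
  have key : S₄ = -(1 / 2) * ∑ a, ∑ b, T a b * ‖μ a - μ b‖ ^ 2 := by
    rw [hS4']
    have expand : ∀ a b : Fin k, T a b * (inner ℝ (μ a) (μ b) : ℝ)
        = (1 / 2) * (T a b * ‖μ a‖ ^ 2) + (1 / 2) * (T a b * ‖μ b‖ ^ 2)
          + (-(1 / 2)) * (T a b * ‖μ a - μ b‖ ^ 2) := by
      intro a b; rw [hinner a b]; ring
    simp_rw [expand]
    simp only [Finset.sum_add_distrib, ← Finset.mul_sum]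
    rw [z1, z2]; ring
  -- remove diagonal terms
  have hfil : ∀ a : Fin k, ∑ b, T a b * ‖μ a - μ b‖ ^ 2
      = ∑ b ∈ Finset.univ.filter (fun b => b ≠ a), T a b * ‖μ a - μ b‖ ^ 2 := by
    intro a
    refine (Finset.sum_filter_of_ne fun b _ hb => ?_).symm
    intro hba
    apply hb
    rw [hba]; simp
  have key2 : S₄ = -(1 / 2) * ∑ a, ∑ b ∈ Finset.univ.filter (fun b => b ≠ a),
      T a b * ‖μ a - μ b‖ ^ 2 := by
    rw [key]; congr 1; exact Finset.sum_congr rfl fun a _ => hfil a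
  refine ⟨key2, ?_⟩
  -- part 2
  have hTnn : ∀ a b : Fin k, a ≠ b → 0 ≤ T a b := by
    intro a b hab
    rw [hT]
    refine Finset.sum_nonneg fun i hi => Finset.sum_nonneg fun j hj => ?_
    have hia : σ i = a := (Finset.mem_filter.1 hi).2
    have hjb : σ j = b := (Finset.mem_filter.1 hj).2
    have : Ystar i j = 0 := by rw [hYstar, if_neg]; rw [hia, hjb]; exact hab
    rw [this, sub_zero]
    exact hnonneg i j
  -- |D| block sums
  have habsoff : ∀ a b : Fin k, a ≠ b →
      ∑ i ∈ Finset.univ.filter (fun i => σ i = a),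
        ∑ j ∈ Finset.univ.filter (fun j => σ j = b), |D i j| = T a b := by
    intro a b hab
    rw [hT]
    refine Finset.sum_congr rfl fun i hi => Finset.sum_congr rfl fun j hj => ?_
    have hia : σ i = a := (Finset.mem_filter.1 hi).2
    have hjb : σ j = b := (Finset.mem_filter.1 hj).2
    have hy : Ystar i j = 0 := by rw [hYstar, if_neg]; rw [hia, hjb]; exact hab
    rw [show D i j = Y i j - Ystar i j from rfl, hy, sub_zero, abs_of_nonneg (hnonneg i j)]
  have habsdiag : ∀ a : Fin k,
      ∑ i ∈ Finset.univ.filter (fun i => σ i = a),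
        ∑ j ∈ Finset.univ.filter (fun j => σ j = a), |D i j| = -T a a := by
    intro a
    rw [hT, ← Finset.sum_neg_distrib]
    refine Finset.sum_congr rfl fun i hi => ?_
    rw [← Finset.sum_neg_distrib]
    refine Finset.sum_congr rfl fun j hj => ?_
    have hia : σ i = a := (Finset.mem_filter.1 hi).2
    have hja : σ j = a := (Finset.mem_filter.1 hj).2
    have hy : Ystar i j = 1 := by rw [hYstar, if_pos]; rw [hia, hja]
    have hD0 : D i j ≤ 0 := by
      rw [show D i j = Y i j - Ystar i j from rfl, hy]
      linarith [hYle1 i j]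
    rw [abs_of_nonpos hD0]
  -- total l1 norm
  have hdiagT : ∀ a : Fin k, -T a a = ∑ b ∈ Finset.univ.filter (fun b => b ≠ a), T a b := by
    intro a
    have h := hTa a
    rw [← Finset.sum_filter_add_sum_filter_not Finset.univ (fun b => b ≠ a) (T a)] at h
    have h2 : ∑ b ∈ Finset.univ.filter (fun b => ¬ b ≠ a), T a b = T a a := by
      rw [show Finset.univ.filter (fun b => ¬ b ≠ a) = {a} from ?_, Finset.sum_singleton]
      ext b; simp
    rw [h2] at h
    linarith
  have hl1 : ∑ i, ∑ j, |D i j|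
      = 2 * ∑ a, ∑ b ∈ Finset.univ.filter (fun b => b ≠ a), T a b := by
    have step1 : ∑ i, ∑ j, |D i j|
        = ∑ a, ∑ b, ∑ i ∈ Finset.univ.filter (fun i => σ i = a),
            ∑ j ∈ Finset.univ.filter (fun j => σ j = b), |D i j| := by
      rw [show (∑ a, ∑ b, ∑ i ∈ Finset.univ.filter (fun i => σ i = a),
            ∑ j ∈ Finset.univ.filter (fun j => σ j = b), |D i j|)
          = ∑ a, ∑ i ∈ Finset.univ.filter (fun i => σ i = a), ∑ j, |D i j| from ?_]
      · rw [Finset.sum_fiberwise Finset.univ σ (fun i => ∑ j, |D i j|)]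
      · refine Finset.sum_congr rfl fun a _ => ?_
        rw [Finset.sum_comm]
        exact Finset.sum_congr rfl fun i _ => Finset.sum_fiberwise Finset.univ σ _
    rw [step1]
    have step2 : ∀ a : Fin k, ∑ b, ∑ i ∈ Finset.univ.filter (fun i => σ i = a),
        ∑ j ∈ Finset.univ.filter (fun j => σ j = b), |D i j|
        = (∑ b ∈ Finset.univ.filter (fun b => b ≠ a), T a b) + (-T a a) := by
      intro a
      rw [← Finset.sum_filter_add_sum_filter_not Finset.univ (fun b => b ≠ a)]
      congr 1
      · exact Finset.sum_congr rfl fun b hb =>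
          habsoff a b (Ne.symm ((Finset.mem_filter.1 hb).2))
      · rw [show Finset.univ.filter (fun b : Fin k => ¬ b ≠ a) = {a} from ?_,
          Finset.sum_singleton, habsdiag a]
        ext b; simp
    simp_rw [step2]
    rw [Finset.sum_add_distrib]
    have : ∑ a, -T a a = ∑ a, ∑ b ∈ Finset.univ.filter (fun b => b ≠ a), T a b :=
      Finset.sum_congr rfl fun a _ => hdiagT a
    rw [this]; ring
  rw [key2, hl1]
  have hstep : ∑ a, ∑ b ∈ Finset.univ.filter (fun b => b ≠ a), T a b * Δ ^ 2
      ≤ ∑ a, ∑ b ∈ Finset.univ.filter (fun b => b ≠ a), T a b * ‖μ a - μ b‖ ^ 2 := by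
    refine Finset.sum_le_sum fun a _ => Finset.sum_le_sum fun b hb => ?_
    have hba : b ≠ a := (Finset.mem_filter.1 hb).2
    have hTab : 0 ≤ T a b := hTnn a b hba.symm
    have hle : Δ ≤ ‖μ a - μ b‖ := hΔ a b hba.symm
    have : Δ ^ 2 ≤ ‖μ a - μ b‖ ^ 2 := by
      apply pow_le_pow_left₀ hΔ0 hle
    exact mul_le_mul_of_nonneg_left this hTab
  have heq : ∑ a, ∑ b ∈ Finset.univ.filter (fun b => b ≠ a), T a b * Δ ^ 2
      = (∑ a, ∑ b ∈ Finset.univ.filter (fun b => b ≠ a), T a b) * Δ ^ 2 := by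
    rw [Finset.sum_mul]
    exact Finset.sum_congr rfl fun a _ => (Finset.sum_mul _ _ _).symm
  nlinarith [hstep, heq]
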